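/- arXiv:math/0510592 — 6 statements merged into one kernel-verified Lean document; each statement's English description precedes it below -/
import Mathlib

section
/- Let N ≥ 1, 1 < p < ∞, and let f : ℝ^N → ℝ be convex and differentiable, satisfying α|ξ|^p ≤ f(ξ) ≤ β(|ξ|^p + 1) for all ξ ∈ ℝ^N and some constants α, β > 0 (so that the convex conjugate f* is real-valued). Let ξ, τ ∈ ℝ^N, set σ := ∇f(ξ), and assume that f* is differentiable at τ and at σ. Then f(ξ) + f*(τ) − τ·ξ ≤ (τ − σ)·(∇f*(τ) − ∇f*(σ)). -/
open Set

noncomputable section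

section aux

variable {E : Type*} [NormedAddCommGroup E] [InnerProductSpace ℝ E] [CompleteSpace E]

/-- Gradient inequality for convex functions. -/
lemma grad_ineq_aux {g : E → ℝ} (hg : ConvexOn ℝ Set.univ g) {x gx : E}
    (h : HasGradientAt g gx x) (y : E) :
    (inner ℝ gx (y - x) : ℝ) ≤ g y - g x := by
  set φ : ℝ → ℝ := fun t => g (t • (y - x) + x) with hφdef
  have hφc : ConvexOn ℝ Set.univ φ := by
    have h1 := hg.comp_affineMap (AffineMap.lineMap x y : ℝ →ᵃ[ℝ] E)
    simp only [preimage_univ] at h1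
    have hfun : φ = g ∘ (AffineMap.lineMap x y : ℝ →ᵃ[ℝ] E) := by
      funext t
      simp [hφdef, AffineMap.lineMap_apply]
    rw [hfun]
    exact h1
  have hline : HasDerivAt (fun t : ℝ => t • (y - x) + x) (y - x) 0 := by
    simpa using ((hasDerivAt_id (0 : ℝ)).smul_const (y - x)).add_const x
  have hfd : HasFDerivAt g (InnerProductSpace.toDual ℝ E gx)
      ((fun t : ℝ => t • (y - x) + x) 0) := by
    simpa using (hasGradientAt_iff_hasFDerivAt.mp h)
  have hderiv : HasDerivAt φ ((inner ℝ gx (y - x) : ℝ)) 0 := by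
    have := hfd.comp_hasDerivAt 0 hline
    simp only [InnerProductSpace.toDual_apply_apply] at this
    exact this
  have hslope := hφc.le_slope_of_hasDerivAt (mem_univ (0 : ℝ)) (mem_univ (1 : ℝ))
    zero_lt_one hderiv
  have h0 : φ 0 = g x := by simp [hφdef]
  have h1 : φ 1 = g y := by simp [hφdef]
  rw [slope_def_field] at hslope
  simp only [h0, h1] at hslope
  calc (inner ℝ gx (y - x) : ℝ) ≤ (g y - g x) / (1 - 0) := hslope
    _ = g y - g x := by norm_num

end aux

theorem stmt_0 (N : ℕ) (hN : 1 ≤ N) (p : ℝ) (hp : 1 < p)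
    (f : EuclideanSpace ℝ (Fin N) → ℝ)
    (hconv : ConvexOn ℝ Set.univ f)
    (α β : ℝ) (hα : 0 < α) (hβ : 0 < β)
    (hgrowl : ∀ ξ : EuclideanSpace ℝ (Fin N), α * ‖ξ‖ ^ p ≤ f ξ)
    (hgrowu : ∀ ξ : EuclideanSpace ℝ (Fin N), f ξ ≤ β * (‖ξ‖ ^ p + 1))
    (f' : EuclideanSpace ℝ (Fin N) → EuclideanSpace ℝ (Fin N))
    (hf' : ∀ x, HasGradientAt f (f' x) x)
    (fstar : EuclideanSpace ℝ (Fin N) → ℝ)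
    (hfstar : ∀ ζ, fstar ζ = ⨆ ξ : EuclideanSpace ℝ (Fin N), ((inner ℝ ζ ξ : ℝ) - f ξ))
    (ξ τ σ : EuclideanSpace ℝ (Fin N)) (hσ : σ = f' ξ)
    (gτ gσ : EuclideanSpace ℝ (Fin N))
    (hgτ : HasGradientAt fstar gτ τ) (hgσ : HasGradientAt fstar gσ σ) :
    f ξ + fstar τ - (inner ℝ τ ξ : ℝ) ≤ (inner ℝ (τ - σ) (gτ - gσ) : ℝ) := by
  -- conjugate exponent
  have hpq : p.HolderConjugate (Real.conjExponent p) := Real.HolderConjugate.conjExponent hp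
  set q := Real.conjExponent p with hqdef
  -- boundedness of the supremand
  have key : ∀ ζ : EuclideanSpace ℝ (Fin N), BddAbove (Set.range fun η : EuclideanSpace ℝ (Fin N) => (inner ℝ ζ η : ℝ) - f η) := by
    intro ζ
    set c : ℝ := (α * p) ^ p⁻¹ with hcdef
    have hc : 0 < c := Real.rpow_pos_of_pos (by positivity) _
    refine ⟨(‖ζ‖ / c) ^ q / q, ?_⟩
    rintro _ ⟨η, rfl⟩
    have h1 : (inner ℝ ζ η : ℝ) ≤ ‖ζ‖ * ‖η‖ := real_inner_le_norm ζ η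
    have h2 : ‖ζ‖ * ‖η‖ = (‖ζ‖ / c) * (c * ‖η‖) := by
      field_simp
    have h3 := Real.young_inequality_of_nonneg
      (div_nonneg (norm_nonneg ζ) hc.le) (mul_nonneg hc.le (norm_nonneg η)) hpq.symm
    have h4 : (c * ‖η‖) ^ p = (α * p) * ‖η‖ ^ p := by
      rw [Real.mul_rpow hc.le (norm_nonneg η), hcdef,
        Real.rpow_inv_rpow (by positivity) hpq.ne_zero]
    have h5 : (c * ‖η‖) ^ p / p = α * ‖η‖ ^ p := by
      rw [h4]; field_simp
    have h6 := hgrowl η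
    have h7 : (inner ℝ ζ η : ℝ) - f η ≤ ‖ζ‖ * ‖η‖ - α * ‖η‖ ^ p := by linarith
    rw [h2] at h7
    calc (inner ℝ ζ η : ℝ) - f η ≤ (‖ζ‖ / c) * (c * ‖η‖) - α * ‖η‖ ^ p := h7
      _ ≤ ((‖ζ‖ / c) ^ q / q + (c * ‖η‖) ^ p / p) - α * ‖η‖ ^ p := by linarith
      _ = (‖ζ‖ / c) ^ q / q := by rw [h5]; ring
  -- every value is at most the sup
  have factA : ∀ ζ η : EuclideanSpace ℝ (Fin N), (inner ℝ ζ η : ℝ) - f η ≤ fstar ζ := by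
    intro ζ η
    rw [hfstar]
    exact le_ciSup (key ζ) η
  -- subgradient inequality for f at ξ
  have hsub : ∀ η : EuclideanSpace ℝ (Fin N), (inner ℝ σ (η - ξ) : ℝ) ≤ f η - f ξ := by
    intro η
    have := hf' ξ
    rw [← hσ] at this
    exact grad_ineq_aux hconv this η
  -- Fenchel equality at σ
  have hfsσ : fstar σ = (inner ℝ σ ξ : ℝ) - f ξ := by
    refine le_antisymm ?_ (factA σ ξ)
    rw [hfstar]
    refine ciSup_le fun η => ?_
    have := hsub η
    rw [inner_sub_right] at this
    linarith
  -- convexity of fstar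
  have hconvstar : ConvexOn ℝ Set.univ fstar := by
    refine ⟨convex_univ, fun a _ b _ s t hs ht hst => ?_⟩
    rw [hfstar]
    refine ciSup_le fun η => ?_
    have ha := factA a η
    have hb := factA b η
    have hin : (inner ℝ (s • a + t • b) η : ℝ) = s * (inner ℝ a η : ℝ) + t * (inner ℝ b η : ℝ) := by
      simp only [inner_add_left, real_inner_smul_left]
    rw [hin]
    have hst' : f η = s * f η + t * f η := by rw [← add_mul, hst, one_mul]
    have hsa := mul_le_mul_of_nonneg_left ha hs
    have htb := mul_le_mul_of_nonneg_left hb ht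
    simp only [smul_eq_mul]
    nlinarith
  -- gσ = ξ
  have hgσξ : gσ = ξ := by
    set h : EuclideanSpace ℝ (Fin N) → ℝ := fun ζ => fstar ζ - (inner ℝ ζ ξ : ℝ) with hhdef
    have hmin : IsLocalMin h σ := by
      refine Filter.Eventually.of_forall fun ζ => ?_
      have := factA ζ ξ
      simp only [hhdef, hfsσ]
      linarith
    have heq : (fun ζ : EuclideanSpace ℝ (Fin N) => (inner ℝ ζ ξ : ℝ)) = fun ζ : EuclideanSpace ℝ (Fin N) => (InnerProductSpace.toDual ℝ (EuclideanSpace ℝ (Fin N)) ξ) ζ := by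
      funext ζ
      rw [InnerProductSpace.toDual_apply_apply]
      exact real_inner_comm ξ ζ
    have hder : HasFDerivAt h
        ((InnerProductSpace.toDual ℝ (EuclideanSpace ℝ (Fin N)) gσ) - (InnerProductSpace.toDual ℝ (EuclideanSpace ℝ (Fin N)) ξ)) σ := by
      have h1 : HasFDerivAt fstar (InnerProductSpace.toDual ℝ (EuclideanSpace ℝ (Fin N)) gσ) σ :=
        hasGradientAt_iff_hasFDerivAt.mp hgσ
      have h2 : HasFDerivAt (fun ζ : EuclideanSpace ℝ (Fin N) => (inner ℝ ζ ξ : ℝ))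
          (InnerProductSpace.toDual ℝ (EuclideanSpace ℝ (Fin N)) ξ) σ := by
        rw [heq]
        exact (InnerProductSpace.toDual ℝ (EuclideanSpace ℝ (Fin N)) ξ).hasFDerivAt
      exact h1.sub h2
    have hz := hmin.hasFDerivAt_eq_zero hder
    have : InnerProductSpace.toDual ℝ (EuclideanSpace ℝ (Fin N)) gσ = InnerProductSpace.toDual ℝ (EuclideanSpace ℝ (Fin N)) ξ :=
      sub_eq_zero.mp hz
    exact (InnerProductSpace.toDual ℝ (EuclideanSpace ℝ (Fin N))).injective this
  -- gradient inequality for fstar at τ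
  have hkey2 : (inner ℝ gτ (σ - τ) : ℝ) ≤ fstar σ - fstar τ :=
    grad_ineq_aux hconvstar hgτ σ
  rw [hgσξ]
  rw [inner_sub_right] at hkey2
  simp only [inner_sub_left, inner_sub_right]
  have c1 := real_inner_comm τ gτ
  have c2 := real_inner_comm σ gτ
  linarith [hfsσ, hkey2]
end
end

section
/- Let N ≥ 1, 1 < p < ∞ and q := p/(p−1). Let f : ℝ^N → ℝ be convex, positively p-homogeneous, and satisfy α|ξ|^p ≤ f(ξ) for all ξ ∈ ℝ^N and some α > 0 (so that f ≥ 0 and the convex conjugate f* is real-valued and nonnegative). Then for all z, w ∈ ℝ^N one has z·w ≤ p^{1/p} q^{1/q} f(z)^{1/p} f*(w)^{1/q}. -/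
open Set

noncomputable section

theorem stmt_3 (N : ℕ) (hN : 1 ≤ N) (p q : ℝ) (hp : 1 < p) (hq : q = p / (p - 1))
    (f : EuclideanSpace ℝ (Fin N) → ℝ)
    (hconv : ConvexOn ℝ Set.univ f)
    (hhom : ∀ t : ℝ, 0 < t → ∀ ξ : EuclideanSpace ℝ (Fin N), f (t • ξ) = t ^ p * f ξ)
    (α : ℝ) (hα : 0 < α)
    (hgrow : ∀ ξ : EuclideanSpace ℝ (Fin N), α * ‖ξ‖ ^ p ≤ f ξ)
    (fstar : EuclideanSpace ℝ (Fin N) → ℝ)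
    (hfstar : ∀ ζ, fstar ζ = ⨆ ξ : EuclideanSpace ℝ (Fin N), ((inner ℝ ζ ξ : ℝ) - f ξ)) :
    ∀ z w : EuclideanSpace ℝ (Fin N),
      (inner ℝ z w : ℝ) ≤ p ^ (1 / p) * q ^ (1 / q) * (f z) ^ (1 / p) * (fstar w) ^ (1 / q) := by
  intro z w
  have hp0 : (0:ℝ) < p := lt_trans one_pos hp
  have hp1 : (0:ℝ) < p - 1 := sub_pos.2 hp
  have hq1 : 1 < q := by
    rw [hq, lt_div_iff₀ hp1]; linarith
  have hq0 : (0:ℝ) < q := lt_trans one_pos hq1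
  have hpq : 1/p + 1/q = 1 := by
    rw [hq]; field_simp; ring
  have hsum : p + q = p * q := by
    rw [hq]; field_simp; ring
  have hconj : p.HolderConjugate q := Real.holderConjugate_iff.mpr ⟨hp, by rw [inv_eq_one_div, inv_eq_one_div]; exact hpq⟩
  -- f 0 = 0
  have hf0 : f 0 = 0 := by
    have h2 := hhom 2 two_pos 0
    have h2p : (1:ℝ) < 2 ^ p := by
      have := Real.rpow_lt_rpow_left_iff (x := (2:ℝ)) (y := 0) (z := p) one_lt_two
      simpa [Real.rpow_zero] using this.2 hp0
    have : f 0 = 2 ^ p * f 0 := by simpa using h2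
    nlinarith
  have hfnn : ∀ ξ, 0 ≤ f ξ := fun ξ =>
    le_trans (by positivity) (hgrow ξ)
  -- boundedness of the family, via Young's inequality
  set δ : ℝ := (p * α) ^ (1/p) with hδ
  have hδ0 : 0 < δ := Real.rpow_pos_of_pos (by positivity) _
  have hδp : δ ^ p = p * α := by
    rw [hδ, one_div, Real.rpow_inv_rpow (by positivity) hp0.ne']
  have hbd : ∀ ξ : EuclideanSpace ℝ (Fin N),
      (inner ℝ w ξ : ℝ) - f ξ ≤ (‖w‖ / δ) ^ q / q := by
    intro ξ
    have h1 : (inner ℝ w ξ : ℝ) ≤ ‖w‖ * ‖ξ‖ := real_inner_le_norm w ξ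
    have h2 : ‖w‖ * ‖ξ‖ = (δ * ‖ξ‖) * (‖w‖ / δ) := by field_simp
    have h3 : (δ * ‖ξ‖) * (‖w‖ / δ) ≤ (δ * ‖ξ‖) ^ p / p + (‖w‖ / δ) ^ q / q :=
      Real.young_inequality_of_nonneg (by positivity) (by positivity) hconj
    have h4 : (δ * ‖ξ‖) ^ p / p = α * ‖ξ‖ ^ p := by
      rw [Real.mul_rpow hδ0.le (norm_nonneg _), hδp]
      field_simp
    have h5 := hgrow ξ
    nlinarith
  have hbdd : BddAbove (Set.range fun ξ : EuclideanSpace ℝ (Fin N) =>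
      (inner ℝ w ξ : ℝ) - f ξ) := by
    refine ⟨(‖w‖ / δ) ^ q / q, ?_⟩
    rintro x ⟨ξ, rfl⟩
    exact hbd ξ
  have hle : ∀ ξ : EuclideanSpace ℝ (Fin N), (inner ℝ w ξ : ℝ) - f ξ ≤ fstar w := by
    intro ξ
    rw [hfstar]
    exact le_ciSup hbdd ξ
  have hfsnn : 0 ≤ fstar w := by
    have := hle 0
    simpa [hf0] using this
  have hkey : ∀ t : ℝ, 0 < t → t * (inner ℝ z w : ℝ) ≤ t ^ p * f z + fstar w := by
    intro t ht
    have := hle (t • z)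
    rw [real_inner_smul_right, hhom t ht z, real_inner_comm] at this
    linarith
  rcases eq_or_lt_of_le (hfnn z) with hz0 | hz0
  · -- f z = 0, hence z = 0
    have hznorm : ‖z‖ = 0 := by
      by_contra h
      have h1 : 0 < ‖z‖ := lt_of_le_of_ne (norm_nonneg z) (Ne.symm h)
      have h2 : 0 < ‖z‖ ^ p := Real.rpow_pos_of_pos h1 p
      have := hgrow z
      nlinarith
    have hz : z = 0 := norm_eq_zero.mp hznorm
    have hiz : (inner ℝ z w : ℝ) = 0 := by rw [hz]; exact inner_zero_left w
    rw [hiz]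
    positivity
  · rcases eq_or_lt_of_le hfsnn with hw0 | hw0
    · -- fstar w = 0
      have hrhs : 0 ≤ p ^ (1 / p) * q ^ (1 / q) * (f z) ^ (1 / p) * (fstar w) ^ (1 / q) := by
        positivity
      refine le_trans ?_ hrhs
      refine le_of_forall_pos_le_add ?_
      intro ε hε
      set t : ℝ := (ε / f z) ^ (1/(p-1)) with htdef
      have ht : 0 < t := Real.rpow_pos_of_pos (by positivity) _
      have htp : t ^ (p-1) = ε / f z := by
        rw [htdef, one_div, Real.rpow_inv_rpow (by positivity) hp1.ne']
      have h1 := hkey t ht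
      have e : t ^ (p - 1 + 1) = t ^ (p-1) * t := by
        rw [Real.rpow_add ht, Real.rpow_one]
      have h2 : t ^ p = t ^ (p-1) * t := by
        rw [← e]; congr 1; ring
      rw [← hw0, add_zero, h2, htp] at h1
      have h3 : (ε / f z) * t * f z = ε * t := by field_simp
      rw [h3] at h1
      have := (mul_le_mul_iff_right₀ ht).mp (by linarith : t * (inner ℝ z w : ℝ) ≤ t * ε)
      linarith
    · -- main case: f z > 0, fstar w > 0
      set a : ℝ := (p * f z) ^ (1/p) with ha
      set b : ℝ := (q * fstar w) ^ (1/q) with hb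
      have ha0 : 0 < a := Real.rpow_pos_of_pos (by positivity) _
      have hb0 : 0 < b := Real.rpow_pos_of_pos (by positivity) _
      have hap : a ^ p = p * f z := by
        rw [ha, one_div, Real.rpow_inv_rpow (by positivity) hp0.ne']
      have hbq : b ^ q = q * fstar w := by
        rw [hb, one_div, Real.rpow_inv_rpow (by positivity) hq0.ne']
      set t : ℝ := b ^ (q/p) / a with ht
      have ht0 : 0 < t := by positivity
      have htp : t ^ p = b ^ q / a ^ p := by
        rw [ht, Real.div_rpow (by positivity) ha0.le, ← Real.rpow_mul hb0.le,
          div_mul_cancel₀ _ hp0.ne']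
      have h1 := hkey t ht0
      have h2 : t ^ p * f z + fstar w = b ^ q := by
        rw [htp, hap, hbq]
        have hfz : f z ≠ 0 := hz0.ne'
        field_simp
        linear_combination hsum
      rw [h2] at h1
      -- divide by t
      have h3 : (inner ℝ z w : ℝ) ≤ b ^ q / t := by
        rw [le_div_iff₀ ht0]
        linarith [h1]
      have h4 : b ^ q / t = a * b := by
        rw [ht]
        rw [div_div_eq_mul_div, mul_comm, mul_div_assoc]
        congr 1
        rw [← Real.rpow_sub hb0]
        have : q - q/p = 1 := by
          field_simp
          linarith [hsum]
        rw [this, Real.rpow_one]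
      rw [h4] at h3
      have h5 : p ^ (1 / p) * q ^ (1 / q) * (f z) ^ (1 / p) * (fstar w) ^ (1 / q) = a * b := by
        rw [ha, hb, Real.mul_rpow hp0.le (hfnn z), Real.mul_rpow hq0.le hfsnn]
        ring
      rw [h5]
      exact h3
end
end

section
/- Let Ω ⊆ ℝ² be a bounded open set, 1 < p < ∞ and q := p/(p−1). Let f : Ω × ℝ² → ℝ be a Carathéodory function such that for a.e. x ∈ Ω the map ξ ↦ f(x,ξ) is convex, positively p-homogeneous, and satisfies α|ξ|^p ≤ f(x,ξ) for all ξ ∈ ℝ² and some α > 0; let f*(x,·) denote the convex conjugate of f(x,·). Let z, w : Ω → ℝ² be measurable functions such that x ↦ f(x, z(x)), x ↦ f*(x, w(x)) and x ↦ z(x)·w(x) are Lebesgue integrable on Ω. Then ∫_Ω z(x)·w(x) dx ≤ p^{1/p} q^{1/q} (∫_Ω f(x, z(x)) dx)^{1/p} (∫_Ω f*(x, w(x)) dx)^{1/q}. -/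
open Set MeasureTheory

noncomputable section

theorem aux_bound (p α b r : ℝ) (hp : 1 < p) (hα : 0 < α) (hb : 0 ≤ b) (hr : 0 ≤ r) :
    b * r - α * r ^ p ≤ max 0 (b * (b / α) ^ (p - 1)⁻¹) := by
  have hp1 : (0:ℝ) < p - 1 := by linarith
  rcases eq_or_lt_of_le hr with h0 | hr0
  · rw [← h0, Real.zero_rpow (by positivity : p ≠ 0)]
    simpa using le_max_left (0:ℝ) (b * (b / α) ^ (p - 1)⁻¹)
  · by_cases hc : b ≤ α * r ^ (p - 1)
    · have hrr : r ^ (p - 1) * r = r ^ p := by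
        rw [← Real.rpow_add_one (ne_of_gt hr0)]; congr 1; ring
      have h1 : b * r ≤ α * r ^ p := by
        calc b * r ≤ α * r ^ (p - 1) * r := mul_le_mul_of_nonneg_right hc hr
        _ = α * r ^ p := by rw [mul_assoc, hrr]
      have h2 := le_max_left (0:ℝ) (b * (b / α) ^ (p - 1)⁻¹)
      linarith
    · push_neg at hc
      have h1 : r ^ (p - 1) < b / α := by
        rw [lt_div_iff₀ hα]; nlinarith
      have hrlt : r < (b / α) ^ (p - 1)⁻¹ := by
        calc r = (r ^ (p - 1)) ^ (p - 1)⁻¹ :=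
              (Real.rpow_rpow_inv hr (ne_of_gt hp1)).symm
        _ < (b / α) ^ (p - 1)⁻¹ :=
              Real.rpow_lt_rpow (by positivity) h1 (by positivity)
      have h2 : b * r ≤ b * (b / α) ^ (p - 1)⁻¹ := mul_le_mul_of_nonneg_left hrlt.le hb
      have h3 : 0 ≤ α * r ^ p := by positivity
      have h4 := le_max_right (0:ℝ) (b * (b / α) ^ (p - 1)⁻¹)
      linarith

theorem key_lemma (p q A B I : ℝ) (hp : 1 < p) (hq : q = p / (p - 1))
    (hA : 0 ≤ A) (hB : 0 ≤ B)
    (h : ∀ t : ℝ, 0 < t → I ≤ t ^ (p - 1) * A + B / t) :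
    I ≤ p ^ (1 / p) * q ^ (1 / q) * A ^ (1 / p) * B ^ (1 / q) := by
  have hp0 : (0:ℝ) < p := lt_trans one_pos hp
  have hp1 : (0:ℝ) < p - 1 := by linarith
  have hq0 : (0:ℝ) < q := by rw [hq]; positivity
  have h1q : 1 / q = (p - 1) / p := by rw [hq]; field_simp
  have hpq : 1 / p + 1 / q = 1 := by rw [h1q]; field_simp; ring
  rcases eq_or_lt_of_le hA with hA0 | hApos
  · -- A = 0
    have hI : I ≤ 0 := by
      refine le_of_forall_pos_le_add ?_
      intro ε hε
      have ht : (0:ℝ) < (B + 1) / ε := by positivity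
      have h2 := h _ ht
      rw [← hA0, mul_zero, zero_add] at h2
      have h3 : B / ((B + 1) / ε) ≤ ε := by
        rw [div_div_eq_mul_div, div_le_iff₀ (by positivity)]
        nlinarith
      linarith
    rw [← hA0, Real.zero_rpow (by positivity : (1:ℝ)/p ≠ 0)]
    calc I ≤ 0 := hI
    _ = p ^ (1/p) * q ^ (1/q) * 0 * B ^ (1/q) := by ring
  · rcases eq_or_lt_of_le hB with hB0 | hBpos
    · -- B = 0
      have hI : I ≤ 0 := by
        refine le_of_forall_pos_le_add ?_
        intro ε hε
        have ht : (0:ℝ) < (ε / A) ^ (p - 1)⁻¹ :=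
          Real.rpow_pos_of_pos (by positivity) _
        have h2 := h _ ht
        rw [← hB0, zero_div, add_zero,
          Real.rpow_inv_rpow (by positivity) (ne_of_gt hp1),
          div_mul_cancel₀ _ (ne_of_gt hApos)] at h2
        linarith
      rw [← hB0, Real.zero_rpow (by positivity : (1:ℝ)/q ≠ 0)]
      calc I ≤ 0 := hI
      _ = p ^ (1/p) * q ^ (1/q) * A ^ (1/p) * 0 := by ring
    · -- A > 0, B > 0
      set s : ℝ := B / ((p - 1) * A) with hs
      have hs0 : 0 < s := by positivity
      set t : ℝ := s ^ (1 / p) with htdef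
      have ht : 0 < t := Real.rpow_pos_of_pos hs0 _
      have hApq : A ^ (1/p) * A ^ (1/q) = A := by
        rw [← Real.rpow_add hApos, hpq, Real.rpow_one]
      have hBpq : B ^ (1/p) * B ^ (1/q) = B := by
        rw [← Real.rpow_add hBpos, hpq, Real.rpow_one]
      have hppq : p ^ (1/p) * p ^ (1/q) = p := by
        rw [← Real.rpow_add hp0, hpq, Real.rpow_one]
      have hsq : s ^ (1/q) = B ^ (1/q) / ((p-1) ^ (1/q) * A ^ (1/q)) := by
        rw [hs, Real.div_rpow hB (by positivity),
          Real.mul_rpow hp1.le hA]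
      have hsp : s ^ (1/p) = B ^ (1/p) / ((p-1) ^ (1/p) * A ^ (1/p)) := by
        rw [hs, Real.div_rpow hB (by positivity),
          Real.mul_rpow hp1.le hA]
      have htp : t ^ (p - 1) = s ^ (1 / q) := by
        rw [htdef, ← Real.rpow_mul hs0.le]
        congr 1
        rw [h1q]; ring
      have e1 : t ^ (p - 1) * A = (p-1) ^ (-(1/q)) * A ^ (1/p) * B ^ (1/q) := by
        rw [htp, hsq, Real.rpow_neg hp1.le]
        have hx : ((p-1:ℝ) ^ (1/q)) ≠ 0 := by positivity
        have hy : (A ^ ((1:ℝ)/q)) ≠ 0 := by positivity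
        field_simp
        linear_combination -hApq
      have e2 : B / t = (p-1) ^ (1/p) * A ^ (1/p) * B ^ (1/q) := by
        rw [htdef, hsp]
        have hx : ((p-1:ℝ) ^ (1/p)) ≠ 0 := by positivity
        have hy : (B ^ ((1:ℝ)/p)) ≠ 0 := by positivity
        rw [div_div_eq_mul_div, div_eq_iff (by positivity)]
        linear_combination (-((p-1)^(1/p) * A^(1/p))) * hBpq
      have e3 : (p-1) ^ (1/p) = (p-1) * (p-1) ^ (-(1/q)) := by
        have h' : (1:ℝ)/p = 1 + (-(1/q)) := by linarith
        rw [h', Real.rpow_add hp1, Real.rpow_one]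
      have e4 : p ^ (1/p) * q ^ (1/q) = p * (p-1) ^ (-(1/q)) := by
        rw [hq, Real.div_rpow hp0.le hp1.le, Real.rpow_neg hp1.le]
        have hx : ((p-1:ℝ) ^ (1/q)) ≠ 0 := by positivity
        have hppq' : p ^ (1/p) * p ^ ((p-1)/p) = p := by rw [← h1q]; exact hppq
        field_simp
        linear_combination hppq'
      refine (h t ht).trans (le_of_eq ?_)
      rw [e1, e2, e4, e3]; ring

theorem stmt_4 (Ω : Set (EuclideanSpace ℝ (Fin 2)))
    (hΩopen : IsOpen Ω) (hΩbdd : Bornology.IsBounded Ω)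
    (p q : ℝ) (hp : 1 < p) (hq : q = p / (p - 1))
    (f : EuclideanSpace ℝ (Fin 2) → EuclideanSpace ℝ (Fin 2) → ℝ)
    (α : ℝ) (hα : 0 < α)
    (hmeas : ∀ ξ, Measurable fun x => f x ξ)
    (hae : ∀ᵐ x ∂(volume.restrict Ω),
      ConvexOn ℝ Set.univ (f x) ∧
      (∀ t : ℝ, 0 < t → ∀ ξ, f x (t • ξ) = t ^ p * f x ξ) ∧
      (∀ ξ, α * ‖ξ‖ ^ p ≤ f x ξ))
    (fstar : EuclideanSpace ℝ (Fin 2) → EuclideanSpace ℝ (Fin 2) → ℝ)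
    (hfstar : ∀ x ζ, fstar x ζ = ⨆ ξ : EuclideanSpace ℝ (Fin 2), ((inner ℝ ζ ξ : ℝ) - f x ξ))
    (z w : EuclideanSpace ℝ (Fin 2) → EuclideanSpace ℝ (Fin 2))
    (hz : Measurable z) (hw : Measurable w)
    (hfz : IntegrableOn (fun x => f x (z x)) Ω)
    (hfw : IntegrableOn (fun x => fstar x (w x)) Ω)
    (hzw : IntegrableOn (fun x => (inner ℝ (z x) (w x) : ℝ)) Ω) :
    ∫ x in Ω, (inner ℝ (z x) (w x) : ℝ) ≤
      p ^ (1 / p) * q ^ (1 / q) * (∫ x in Ω, f x (z x)) ^ (1 / p) *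
        (∫ x in Ω, fstar x (w x)) ^ (1 / q) := by
  have hp0 : (0:ℝ) < p := by linarith
  have hp1 : (0:ℝ) < p - 1 := by linarith
  have hmain : ∀ᵐ x ∂(volume.restrict Ω),
      0 ≤ f x (z x) ∧ 0 ≤ fstar x (w x) ∧
      ∀ t : ℝ, 0 < t →
        (inner ℝ (z x) (w x) : ℝ) ≤ t ^ (p - 1) * f x (z x) + fstar x (w x) / t := by
    filter_upwards [hae] with x hx
    obtain ⟨hconv, hhom, hcoer⟩ := hx
    have hbdd : BddAbove (Set.range fun ξ : EuclideanSpace ℝ (Fin 2) =>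
        (inner ℝ (w x) ξ : ℝ) - f x ξ) := by
      refine ⟨max 0 (‖w x‖ * (‖w x‖ / α) ^ (p - 1)⁻¹), ?_⟩
      rintro y ⟨ξ, rfl⟩
      have h1 : (inner ℝ (w x) ξ : ℝ) ≤ ‖w x‖ * ‖ξ‖ := real_inner_le_norm _ _
      have h2 := hcoer ξ
      have h3 := aux_bound p α ‖w x‖ ‖ξ‖ hp hα (norm_nonneg _) (norm_nonneg _)
      simp only
      linarith
    have hle : ∀ ξ : EuclideanSpace ℝ (Fin 2),
        (inner ℝ (w x) ξ : ℝ) - f x ξ ≤ fstar x (w x) := by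
      intro ξ
      rw [hfstar]
      exact le_ciSup hbdd ξ
    have hf0 : f x 0 = 0 := by
      have h2 := hhom 2 (by norm_num) 0
      rw [smul_zero] at h2
      have h2p : (1:ℝ) < 2 ^ p := by
        have := (Real.rpow_lt_rpow_left_iff (x := (2:ℝ)) (y := 0) (z := p)
          one_lt_two).mpr hp0
        simpa using this
      have h3 : (2 ^ p - 1) * f x 0 = 0 := by linear_combination -h2
      rcases mul_eq_zero.mp h3 with h4 | h4
      · linarith
      · exact h4
    refine ⟨le_trans (by positivity) (hcoer (z x)), ?_, ?_⟩
    · have h0 := hle 0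
      rw [inner_zero_right, hf0] at h0
      linarith
    · intro t ht
      have h4 := hle (t • z x)
      rw [real_inner_smul_right, hhom t ht (z x)] at h4
      have hsym : (inner ℝ (z x) (w x) : ℝ) = inner ℝ (w x) (z x) := real_inner_comm _ _
      have htp : t ^ (p - 1) * t = t ^ p := by
        rw [← Real.rpow_add_one (ne_of_gt ht)]; congr 1; ring
      rw [hsym]
      have hmul : (inner ℝ (w x) (z x) : ℝ) * t ≤
          (t ^ (p - 1) * f x (z x) + fstar x (w x) / t) * t := by
        have e : (t ^ (p - 1) * f x (z x)) * t = t ^ p * f x (z x) := by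
          rw [← htp]; ring
        rw [add_mul, e, div_mul_cancel₀ _ (ne_of_gt ht)]
        linarith
      exact le_of_mul_le_mul_right hmul ht
  have hA0 : 0 ≤ ∫ x in Ω, f x (z x) :=
    integral_nonneg_of_ae (by filter_upwards [hmain] with x hx using hx.1)
  have hB0 : 0 ≤ ∫ x in Ω, fstar x (w x) :=
    integral_nonneg_of_ae (by filter_upwards [hmain] with x hx using hx.2.1)
  refine key_lemma p q _ _ _ hp hq hA0 hB0 ?_
  intro t ht
  have hmono : (∫ x in Ω, (inner ℝ (z x) (w x) : ℝ)) ≤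
      ∫ x in Ω, (t ^ (p - 1) * f x (z x) + fstar x (w x) / t) := by
    refine integral_mono_ae hzw ((hfz.const_mul _).add (hfw.div_const _)) ?_
    filter_upwards [hmain] with x hx using hx.2.2 t ht
  rwa [integral_add (hfz.const_mul _) (hfw.div_const _), integral_const_mul,
    integral_div] at hmono
end
end

section
/- Let m ≥ 1 be an integer. There exists a constant C > 0 depending only on m with the following property: for every nonempty set Γ ⊆ ℝ² that can be written as Γ = Γ_1 ∪ … ∪ Γ_m, where each Γ_i is connected and each nonempty Γ_i contains at least two points, and which satisfies H^1(Γ) < ∞, there exist an integer k ≤ m, points x_1, …, x_k ∈ ℝ² and radii r_1, …, r_k > 0 such that: (a) Γ ⊆ ⋃_{i=1}^k B(x_i, r_i) (open balls); (b) r_i ≤ C · H^1(Γ ∩ B(x_i, r_i)) for every i; and (c) the closed balls of center x_i and radius 2r_i, i = 1, …, k, are pairwise disjoint. -/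
open Set MeasureTheory Metric

noncomputable section

local notation "E2" => EuclideanSpace ℝ (Fin 2)

/-- A preconnected set has H^1 measure at least the distance between any two points. -/
lemma edist_le_H1 {Γ : Set E2} (hΓ : IsPreconnected Γ) {a b : E2} (ha : a ∈ Γ) (hb : b ∈ Γ) :
    ENNReal.ofReal (dist a b) ≤ μH[1] Γ := by
  have hf : LipschitzWith 1 (fun y : E2 => dist y a) := LipschitzWith.dist_left a
  have himg : μH[1] ((fun y : E2 => dist y a) '' Γ) ≤ μH[1] Γ := by
    simpa using hf.hausdorffMeasure_image_le (d := 1) (by norm_num) Γ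
  have hconn : IsPreconnected ((fun y : E2 => dist y a) '' Γ) :=
    hΓ.image _ (hf.continuous.continuousOn)
  have h0 : (0 : ℝ) ∈ (fun y : E2 => dist y a) '' Γ := ⟨a, ha, by simp⟩
  have hd : dist b a ∈ (fun y : E2 => dist y a) '' Γ := ⟨b, hb, rfl⟩
  have hIcc : Icc (0 : ℝ) (dist b a) ⊆ (fun y : E2 => dist y a) '' Γ :=
    hconn.Icc_subset h0 hd
  calc ENNReal.ofReal (dist a b) = volume (Icc (0:ℝ) (dist b a)) := by
        rw [Real.volume_Icc, dist_comm a b]; simp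
    _ = μH[1] (Icc (0:ℝ) (dist b a)) := by rw [MeasureTheory.hausdorffMeasure_real]
    _ ≤ μH[1] ((fun y : E2 => dist y a) '' Γ) := measure_mono hIcc
    _ ≤ μH[1] Γ := himg

/-- Merging lemma: balls with controlled radii can be merged into balls with
pairwise disjoint doubles, at the cost of a factor 6 per merge. -/
lemma merge_aux (Γ : Set E2) (hfin : μH[1] Γ < ⊤) :
    ∀ n : ℕ, ∀ s : Finset (E2 × ℝ), s.card ≤ n → ∀ c : ℝ, 0 < c →
    (∀ p ∈ s, 0 < p.2) → (Γ ⊆ ⋃ p ∈ s, ball p.1 p.2) →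
    (∀ p ∈ s, p.2 ≤ c * (μH[1] (Γ ∩ ball p.1 p.2)).toReal) →
    ∃ t : Finset (E2 × ℝ), t.card ≤ s.card ∧ (∀ p ∈ t, 0 < p.2) ∧
      (Γ ⊆ ⋃ p ∈ t, ball p.1 p.2) ∧
      (∀ p ∈ t, p.2 ≤ 6 ^ n * c * (μH[1] (Γ ∩ ball p.1 p.2)).toReal) ∧
      (t : Set (E2 × ℝ)).Pairwise
        (fun p q => Disjoint (closedBall p.1 (2 * p.2)) (closedBall q.1 (2 * q.2))) := by
  classical
  intro n
  induction n with
  | zero =>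
    intro s hcard c hc hpos hcov hbd
    have hs : s = ∅ := Finset.card_eq_zero.1 (Nat.le_zero.1 hcard)
    refine ⟨s, le_rfl, hpos, hcov, ?_, ?_⟩
    · simpa using hbd
    · subst hs; simp
  | succ n ih =>
    intro s hcard c hc hpos hcov hbd
    by_cases hd : (s : Set (E2 × ℝ)).Pairwise
        (fun p q => Disjoint (closedBall p.1 (2 * p.2)) (closedBall q.1 (2 * q.2)))
    · refine ⟨s, le_rfl, hpos, hcov, fun p hp => ?_, hd⟩
      refine (hbd p hp).trans ?_
      have h1 : (1:ℝ) ≤ 6 ^ (n+1) := one_le_pow₀ (by norm_num)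
      rw [mul_assoc]
      exact le_mul_of_one_le_left (by positivity) h1
    · -- find two intersecting doubled balls, with the larger radius first
      have hex : ∃ p ∈ s, ∃ q ∈ s, p ≠ q ∧
          ¬ Disjoint (closedBall p.1 (2 * p.2)) (closedBall q.1 (2 * q.2)) ∧ q.2 ≤ p.2 := by
        simp only [Set.Pairwise, not_forall] at hd
        obtain ⟨p, hp, q, hq, hne, hnd⟩ := hd
        rcases le_total q.2 p.2 with h | h
        · exact ⟨p, hp, q, hq, hne, hnd, h⟩
        · exact ⟨q, hq, p, hp, hne.symm, fun h' => hnd h'.symm, h⟩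
      obtain ⟨p, hp, q, hq, hne, hnd, hle⟩ := hex
      obtain ⟨y, hy1, hy2⟩ := Set.not_disjoint_iff.1 hnd
      have hdistpq : dist p.1 q.1 ≤ 2 * p.2 + 2 * q.2 := by
        calc dist p.1 q.1 ≤ dist p.1 y + dist y q.1 := dist_triangle _ _ _
          _ ≤ 2 * p.2 + 2 * q.2 := by
            have := mem_closedBall.1 hy1
            have := mem_closedBall.1 hy2
            rw [dist_comm p.1 y] at *
            linarith [mem_closedBall'.1 hy1, mem_closedBall.1 hy2]
      have hppos := hpos p hp
      have hqpos := hpos q hq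
      set s' : Finset (E2 × ℝ) := insert (p.1, 6 * p.2) (s \ {p, q}) with hs'
      have hsub : ({p, q} : Finset (E2 × ℝ)) ⊆ s := by
        intro z hz; rcases Finset.mem_insert.1 hz with h | h
        · exact h ▸ hp
        · exact (Finset.mem_singleton.1 h) ▸ hq
      have hcard2 : ({p, q} : Finset (E2 × ℝ)).card = 2 := by
        rw [Finset.card_insert_of_notMem (by simpa using hne), Finset.card_singleton]
      have hge2 : 2 ≤ s.card := by
        have := Finset.card_le_card hsub; omega
      have hcards' : s'.card ≤ s.card - 1 := by
        have h1 : s'.card ≤ (s \ {p, q}).card + 1 := Finset.card_insert_le _ _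
        rw [Finset.card_sdiff_of_subset hsub, hcard2] at h1
        omega
      -- conditions for s' with constant 6 * c
      have hpos' : ∀ w ∈ s', 0 < w.2 := by
        intro w hw
        rcases Finset.mem_insert.1 hw with h | h
        · subst h; positivity
        · exact hpos w (Finset.mem_sdiff.1 h).1
      have hcov' : Γ ⊆ ⋃ w ∈ s', ball w.1 w.2 := by
        intro z hz
        obtain ⟨w, hw, hzw⟩ := Set.mem_iUnion₂.1 (hcov hz)
        by_cases hwpq : w = p ∨ w = q
        · refine Set.mem_iUnion₂.2 ⟨(p.1, 6 * p.2), Finset.mem_insert_self _ _, ?_⟩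
          simp only [mem_ball] at hzw ⊢
          rcases hwpq with h | h
          · subst h; linarith
          · subst h
            calc dist z p.1 ≤ dist z w.1 + dist w.1 p.1 := dist_triangle _ _ _
              _ < w.2 + (2 * p.2 + 2 * w.2) := by
                  rw [dist_comm w.1 p.1]; linarith
              _ ≤ 6 * p.2 := by linarith
        · push_neg at hwpq
          refine Set.mem_iUnion₂.2 ⟨w, Finset.mem_insert_of_mem ?_, hzw⟩
          refine Finset.mem_sdiff.2 ⟨hw, ?_⟩
          simp [hwpq.1, hwpq.2]
      have hbd' : ∀ w ∈ s', w.2 ≤ 6 * c * (μH[1] (Γ ∩ ball w.1 w.2)).toReal := by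
        intro w hw
        rcases Finset.mem_insert.1 hw with h | h
        · subst h
          have hmono : μH[1] (Γ ∩ ball p.1 p.2) ≤ μH[1] (Γ ∩ ball p.1 (6 * p.2)) :=
            measure_mono (Set.inter_subset_inter_right _ (ball_subset_ball (by linarith)))
          have hfin' : μH[1] (Γ ∩ ball p.1 (6 * p.2)) ≠ ⊤ :=
            ((measure_mono Set.inter_subset_left).trans_lt hfin).ne
          have := ENNReal.toReal_mono hfin' hmono
          have hb := hbd p hp
          simp only
          nlinarith
        · obtain ⟨hws, -⟩ := Finset.mem_sdiff.1 h
          have hb := hbd w hws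
          have := ENNReal.toReal_nonneg (a := μH[1] (Γ ∩ ball w.1 w.2))
          nlinarith
      obtain ⟨t, htc, ht1, ht2, ht3, ht4⟩ :=
        ih s' (by omega) (6 * c) (by positivity) hpos' hcov' hbd'
      refine ⟨t, by omega, ht1, ht2, fun w hw => ?_, ht4⟩
      refine (ht3 w hw).trans (le_of_eq ?_)
      ring

theorem stmt_6 (m : ℕ) (hm : 1 ≤ m) :
    ∃ C > (0 : ℝ), ∀ (Γ : Set (EuclideanSpace ℝ (Fin 2)))
      (Γi : Fin m → Set (EuclideanSpace ℝ (Fin 2))),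
      Γ.Nonempty →
      Γ = ⋃ i, Γi i →
      (∀ i, IsPreconnected (Γi i)) →
      (∀ i, (Γi i).Nonempty → (Γi i).Nontrivial) →
      μH[1] Γ < ⊤ →
      ∃ k : ℕ, k ≤ m ∧
        ∃ (x : Fin k → EuclideanSpace ℝ (Fin 2)) (r : Fin k → ℝ),
          (∀ i, 0 < r i) ∧
          Γ ⊆ ⋃ i, ball (x i) (r i) ∧
          (∀ i, r i ≤ C * (μH[1] (Γ ∩ ball (x i) (r i))).toReal) ∧
          Pairwise fun i j =>
            Disjoint (closedBall (x i) (2 * r i)) (closedBall (x j) (2 * r j)) := by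
  classical
  refine ⟨6 ^ m * 4, by positivity, ?_⟩
  intro Γ Γi hne hunion hconn hnt hfin
  -- each nonempty Γi fits in a controlled ball
  have hsub : ∀ i, Γi i ⊆ Γ := by
    intro i; rw [hunion]; exact Set.subset_iUnion _ i
  have hball : ∀ i : Fin m, ∃ a : E2, ∃ ρ : ℝ, (Γi i).Nonempty →
      (0 < ρ ∧ Γi i ⊆ ball a ρ ∧ ρ ≤ 4 * (μH[1] (Γ ∩ ball a ρ)).toReal) := by
    intro i
    by_cases hni : (Γi i).Nonempty
    · obtain ⟨a, ha, b, hb, hab⟩ := hnt i hni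
      have hfin_i : μH[1] (Γi i) < ⊤ := (measure_mono (hsub i)).trans_lt hfin
      have hed : ∀ u ∈ Γi i, ∀ v ∈ Γi i, edist u v ≤ 2 * μH[1] (Γi i) := by
        intro u hu v hv
        calc edist u v ≤ edist u a + edist a v := edist_triangle _ _ _
          _ ≤ μH[1] (Γi i) + μH[1] (Γi i) := by
              gcongr
              · rw [edist_dist]; exact edist_le_H1 (hconn i) hu ha
              · rw [edist_dist]; exact edist_le_H1 (hconn i) ha hv
          _ = 2 * μH[1] (Γi i) := (two_mul _).symm
      have hdiam : EMetric.diam (Γi i) ≤ 2 * μH[1] (Γi i) := EMetric.diam_le hed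
      have hlt2 : 2 * μH[1] (Γi i) < ⊤ := ENNReal.mul_lt_top (by norm_num) hfin_i
      have hdiam_ne : EMetric.diam (Γi i) ≠ ⊤ := (hdiam.trans_lt hlt2).ne
      have hbdd : Bornology.IsBounded (Γi i) := Metric.isBounded_iff_ediam_ne_top.2 hdiam_ne
      have hdpos : 0 < diam (Γi i) :=
        lt_of_lt_of_le (dist_pos.2 hab) (dist_le_diam_of_mem hbdd ha hb)
      refine ⟨a, 2 * diam (Γi i), fun _ => ⟨by positivity, ?_, ?_⟩⟩
      · intro z hz
        have := dist_le_diam_of_mem hbdd hz ha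
        simp only [mem_ball]; linarith
      · have h1 : diam (Γi i) ≤ 2 * (μH[1] (Γi i)).toReal := by
          have h2 : (EMetric.diam (Γi i)).toReal ≤ (2 * μH[1] (Γi i)).toReal :=
            ENNReal.toReal_mono hlt2.ne hdiam
          rwa [ENNReal.toReal_mul, ENNReal.toReal_ofNat] at h2
        have h3 : μH[1] (Γi i) ≤ μH[1] (Γ ∩ ball a (2 * diam (Γi i))) := by
          refine measure_mono (Set.subset_inter (hsub i) ?_)
          intro z hz
          have := dist_le_diam_of_mem hbdd hz ha
          simp only [mem_ball]; linarith
        have hfin' : μH[1] (Γ ∩ ball a (2 * diam (Γi i))) ≠ ⊤ :=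
          ((measure_mono Set.inter_subset_left).trans_lt hfin).ne
        have h4 := ENNReal.toReal_mono hfin' h3
        linarith
    · exact ⟨0, 0, fun h => absurd h hni⟩
  choose a ρ hball using hball
  set s : Finset (E2 × ℝ) :=
    (Finset.univ.filter fun i : Fin m => (Γi i).Nonempty).image fun i => (a i, ρ i) with hs
  have hmem : ∀ w ∈ s, ∃ i : Fin m, (Γi i).Nonempty ∧ w = (a i, ρ i) := by
    intro w hw
    obtain ⟨i, hi, hwi⟩ := Finset.mem_image.1 hw
    exact ⟨i, (Finset.mem_filter.1 hi).2, hwi.symm⟩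
  have hscard : s.card ≤ m := by
    calc s.card ≤ (Finset.univ.filter fun i : Fin m => (Γi i).Nonempty).card :=
          Finset.card_image_le
      _ ≤ (Finset.univ : Finset (Fin m)).card := Finset.card_filter_le _ _
      _ = m := Finset.card_fin m
  have hpos : ∀ w ∈ s, 0 < w.2 := by
    intro w hw; obtain ⟨i, hi, rfl⟩ := hmem w hw
    exact (hball i hi).1
  have hcov : Γ ⊆ ⋃ w ∈ s, ball w.1 w.2 := by
    intro z hz
    rw [hunion] at hz
    obtain ⟨i, hzi⟩ := Set.mem_iUnion.1 hz
    have hi : (Γi i).Nonempty := ⟨z, hzi⟩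
    refine Set.mem_iUnion₂.2 ⟨(a i, ρ i), ?_, (hball i hi).2.1 hzi⟩
    exact Finset.mem_image.2 ⟨i, Finset.mem_filter.2 ⟨Finset.mem_univ _, hi⟩, rfl⟩
  have hbd : ∀ w ∈ s, w.2 ≤ 4 * (μH[1] (Γ ∩ ball w.1 w.2)).toReal := by
    intro w hw; obtain ⟨i, hi, rfl⟩ := hmem w hw
    exact (hball i hi).2.2
  obtain ⟨t, htc, ht1, ht2, ht3, ht4⟩ :=
    merge_aux Γ hfin m s hscard 4 (by norm_num) hpos hcov hbd
  refine ⟨t.card, le_trans htc hscard, ?_⟩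
  have e : ↥t ≃ Fin t.card := Fintype.equivFinOfCardEq (Fintype.card_coe t)
  refine ⟨fun j => ((e.symm j : ↥t) : E2 × ℝ).1, fun j => ((e.symm j : ↥t) : E2 × ℝ).2,
    ?_, ?_, ?_, ?_⟩
  · intro j; exact ht1 _ (e.symm j).2
  · intro z hz
    obtain ⟨w, hw, hzw⟩ := Set.mem_iUnion₂.1 (ht2 hz)
    refine Set.mem_iUnion.2 ⟨e ⟨w, hw⟩, ?_⟩
    simpa using hzw
  · intro j; exact ht3 _ (e.symm j).2
  · intro i j hij
    refine ht4 (e.symm i).2 (e.symm j).2 ?_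
    intro h
    exact hij (by
      have : e.symm i = e.symm j := Subtype.ext h
      simpa using congrArg e this)
end
end

section
/- Fix an integer N ≥ 2 and constants L > 0, M > 1. There exists a constant C > 0, depending only on N, L and M, such that for every L-Lipschitz function f : Q' → [1, M] and every function u : ℝ^N → ℝ that is continuously differentiable on an open neighborhood of the closure of Q_f and satisfies u(x', 0) = 0 for all x' ∈ Q', one has ∫_{Q_f} u² dx ≤ C² ∫_{Q_f} |∇u|² dx. -/
open Set MeasureTheory

noncomputable section

/-- Projection onto the first `d` coordinates. -/
def proj {d : ℕ} (x : EuclideanSpace ℝ (Fin (d + 1))) : EuclideanSpace ℝ (Fin d) :=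
  WithLp.toLp 2 (fun i : Fin d => x i.castSucc)

/-- Embedding of the base `Q' × {0}`. -/
def embed {d : ℕ} (y : EuclideanSpace ℝ (Fin d)) : EuclideanSpace ℝ (Fin (d + 1)) :=
  WithLp.toLp 2 (fun i : Fin (d + 1) => if h : (i : ℕ) < d then y ⟨i, h⟩ else 0)

/-- The open unit cube `Q' = (0,1)^d`. -/
def cube (d : ℕ) : Set (EuclideanSpace ℝ (Fin d)) :=
  {y | ∀ i, y i ∈ Ioo (0 : ℝ) 1}

/-- The open subgraph domain `Q_f`. -/
def Qf {d : ℕ} (f : EuclideanSpace ℝ (Fin d) → ℝ) : Set (EuclideanSpace ℝ (Fin (d + 1))) :=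
  {x | proj x ∈ cube d ∧ x (Fin.last d) ∈ Ioo 0 (f (proj x))}

/-! ### Auxiliary constructions -/

/-- The last unit coordinate vector. -/
def eLast (d : ℕ) : EuclideanSpace ℝ (Fin (d + 1)) := EuclideanSpace.single (Fin.last d) 1

/-- The affine parametrization of `ℝ^{d+1}` by base point and height. -/
def Psi (d : ℕ) (p : EuclideanSpace ℝ (Fin d) × ℝ) : EuclideanSpace ℝ (Fin (d + 1)) :=
  embed p.1 + p.2 • eLast d

/-- The subgraph region in product coordinates. -/
def Sf {d : ℕ} (f : EuclideanSpace ℝ (Fin d) → ℝ) : Set (EuclideanSpace ℝ (Fin d) × ℝ) :=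
  {p | p.1 ∈ cube d ∧ p.2 ∈ Ioo 0 (f p.1)}

lemma Psi_apply_castSucc {d : ℕ} (p : EuclideanSpace ℝ (Fin d) × ℝ) (j : Fin d) :
    Psi d p (j.castSucc) = p.1 j := by
  have hne : j.castSucc ≠ Fin.last d := (Fin.castSucc_lt_last j).ne
  have h : ((j.castSucc : Fin (d+1)) : ℕ) < d := j.isLt
  simp [Psi, eLast, embed, h, EuclideanSpace.single_apply, hne]

lemma Psi_apply_last {d : ℕ} (p : EuclideanSpace ℝ (Fin d) × ℝ) :
    Psi d p (Fin.last d) = p.2 := by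
  simp [Psi, eLast, embed, EuclideanSpace.single_apply]

lemma proj_Psi {d : ℕ} (p : EuclideanSpace ℝ (Fin d) × ℝ) : proj (Psi d p) = p.1 := by
  ext j; exact Psi_apply_castSucc p j

lemma Psi_zero {d : ℕ} (y : EuclideanSpace ℝ (Fin d)) : Psi d (y, 0) = embed y := by
  simp [Psi]

lemma preimage_Psi {d : ℕ} (f : EuclideanSpace ℝ (Fin d) → ℝ) :
    Psi d ⁻¹' (Qf f) = Sf f := by
  ext p
  simp only [Qf, Sf, mem_preimage, mem_setOf_eq, proj_Psi, Psi_apply_last]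

lemma embed_add {d : ℕ} (a b : EuclideanSpace ℝ (Fin d)) :
    embed (a + b) = embed a + embed b := by
  ext i
  by_cases h : (i : ℕ) < d <;> simp [embed, h, PiLp.add_apply]

lemma embed_smul {d : ℕ} (c : ℝ) (a : EuclideanSpace ℝ (Fin d)) :
    embed (c • a) = c • embed a := by
  ext i
  by_cases h : (i : ℕ) < d <;> simp [embed, h, PiLp.smul_apply]

lemma Psi_eq_self {d : ℕ} (x : EuclideanSpace ℝ (Fin (d+1))) :
    Psi d (proj x, x (Fin.last d)) = x := by
  ext i
  induction i using Fin.lastCases with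
  | last => rw [Psi_apply_last]
  | cast j => rw [Psi_apply_castSucc]; rfl

/-- `Psi` as a linear equivalence. -/
def PsiLin (d : ℕ) : (EuclideanSpace ℝ (Fin d) × ℝ) ≃ₗ[ℝ] EuclideanSpace ℝ (Fin (d + 1)) where
  toFun := Psi d
  invFun x := (proj x, x (Fin.last d))
  map_add' p q := by
    simp only [Psi, Prod.fst_add, Prod.snd_add, embed_add, add_smul]
    abel
  map_smul' c p := by
    simp only [Psi, Prod.smul_fst, Prod.smul_snd, embed_smul, RingHom.id_apply, smul_add,
      smul_smul, smul_eq_mul]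
  left_inv p := by
    ext
    · exact congrFun (congrArg WithLp.ofLp (proj_Psi p)) _
    · exact Psi_apply_last p
  right_inv x := Psi_eq_self x

lemma continuous_Psi (d : ℕ) : Continuous (Psi d) :=
  (PsiLin d).toContinuousLinearEquiv.continuous

lemma measurableEmbedding_Psi (d : ℕ) : MeasurableEmbedding (Psi d) :=
  (PsiLin d).toContinuousLinearEquiv.toHomeomorph.measurableEmbedding

/-- `Psi` as a measurable equivalence, built from measure preserving pieces. -/
def PsiME (d : ℕ) : (EuclideanSpace ℝ (Fin d) × ℝ) ≃ᵐ EuclideanSpace ℝ (Fin (d + 1)) :=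
  ((MeasurableEquiv.prodCongr (MeasurableEquiv.toLp 2 (Fin d → ℝ)).symm
      (MeasurableEquiv.refl ℝ)).trans
    ((MeasurableEquiv.prodComm).trans
      ((MeasurableEquiv.piFinSuccAbove (fun _ : Fin (d+1) => ℝ) (Fin.last d)).symm.trans
        (MeasurableEquiv.toLp 2 (Fin (d+1) → ℝ)).symm.symm)))

lemma PsiME_coe (d : ℕ) : ⇑(PsiME d) = Psi d := by
  funext p
  rw [show (PsiME d) p
      = WithLp.toLp 2 ((Fin.insertNth (Fin.last d) p.2 (fun j => p.1 j) : Fin (d+1) → ℝ) :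
          Fin (d+1) → ℝ) from rfl]
  ext i
  induction i using Fin.lastCases with
  | last => rw [Psi_apply_last, PiLp.toLp_apply, Fin.insertNth_apply_same]
  | cast j =>
      rw [Psi_apply_castSucc, PiLp.toLp_apply, ← Fin.succAbove_last_apply, Fin.insertNth_apply_succAbove]

lemma measurePreserving_Psi (d : ℕ) :
    MeasurePreserving (Psi d) (volume : Measure (EuclideanSpace ℝ (Fin d) × ℝ)) volume := by
  rw [← PsiME_coe]
  have h1 : MeasurePreserving
      (Prod.map (MeasurableEquiv.toLp 2 (Fin d → ℝ)).symm (id : ℝ → ℝ))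
      ((volume : Measure (EuclideanSpace ℝ (Fin d))).prod volume)
      ((volume : Measure (Fin d → ℝ)).prod volume) :=
    (EuclideanSpace.volume_preserving_symm_measurableEquiv_toLp (Fin d)).prod (MeasurePreserving.id _)
  have h2 : MeasurePreserving (Prod.swap : (Fin d → ℝ) × ℝ → ℝ × (Fin d → ℝ))
      ((volume : Measure (Fin d → ℝ)).prod volume)
      ((volume : Measure ℝ).prod volume) := Measure.measurePreserving_swap
  have h3 := (volume_preserving_piFinSuccAbove (fun _ : Fin (d+1) => ℝ) (Fin.last d)).symm
  have h4 := (EuclideanSpace.volume_preserving_symm_measurableEquiv_toLp (Fin (d+1))).symm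
  have := h4.comp (h3.comp (h2.comp h1))
  exact this

lemma isOpen_cube (d : ℕ) : IsOpen (cube d) := by
  have : cube d = ⋂ i, (fun y : EuclideanSpace ℝ (Fin d) => y i) ⁻¹' Ioo (0:ℝ) 1 := by
    ext y; simp [cube]
  rw [this]
  exact isOpen_iInter_of_finite fun i => isOpen_Ioo.preimage (PiLp.continuous_apply 2 _ i)

lemma isOpen_Sf {d : ℕ} {f : EuclideanSpace ℝ (Fin d) → ℝ}
    (hf : ContinuousOn f (cube d)) : IsOpen (Sf f) := by
  have h1 : IsOpen ((cube d) ×ˢ (Ioi (0:ℝ))) := (isOpen_cube d).prod isOpen_Ioi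
  have h2 : ContinuousOn (fun p : EuclideanSpace ℝ (Fin d) × ℝ => (f p.1, p.2))
      ((cube d) ×ˢ (Ioi (0:ℝ))) := by
    refine ContinuousOn.prodMk ?_ continuous_snd.continuousOn
    exact hf.comp continuous_fst.continuousOn fun p hp => hp.1
  have h3 : IsOpen {q : ℝ × ℝ | q.2 < q.1} := isOpen_lt continuous_snd continuous_fst
  have := h2.isOpen_inter_preimage h1 h3
  convert this using 1
  ext p
  simp only [Sf, mem_setOf_eq, mem_inter_iff, mem_prod, mem_preimage, mem_Ioi, mem_Ioo]
  tauto

lemma isCompact_box (n : ℕ) (R : ℝ) :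
    IsCompact {x : EuclideanSpace ℝ (Fin n) | ∀ i, x i ∈ Icc (0:ℝ) R} := by
  have h : IsCompact (Set.pi univ fun _ : Fin n => Icc (0:ℝ) R) :=
    isCompact_univ_pi fun _ => isCompact_Icc
  have h2 := (PiLp.continuousLinearEquiv 2 ℝ
    (fun _ : Fin n => ℝ)).toHomeomorph.isCompact_preimage.mpr h
  convert h2 using 1
  ext x
  simp [Set.mem_pi, Pi.le_def, forall_and]

lemma isCompact_closure_Qf {d : ℕ} {f : EuclideanSpace ℝ (Fin d) → ℝ} {M : ℝ}
    (hfM : ∀ y ∈ cube d, f y ≤ M) : IsCompact (closure (Qf f)) := by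
  have hbox := isCompact_box (d+1) (max 1 M)
  refine hbox.of_isClosed_subset isClosed_closure (closure_minimal ?_ hbox.isClosed)
  rintro x ⟨hx1, hx2⟩
  intro i
  induction i using Fin.lastCases with
  | last =>
      refine ⟨hx2.1.le, hx2.2.le.trans ((hfM _ hx1).trans (le_max_right _ _))⟩
  | cast j =>
      have : x j.castSucc ∈ Ioo (0:ℝ) 1 := hx1 j
      exact ⟨this.1.le, this.2.le.trans (le_max_left _ _)⟩

lemma isCompact_closure_Sf {d : ℕ} {f : EuclideanSpace ℝ (Fin d) → ℝ} {M : ℝ}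
    (hfM : ∀ y ∈ cube d, f y ≤ M) : IsCompact (closure (Sf f)) := by
  have h := isCompact_closure_Qf hfM
  have hh := (PsiLin d).toContinuousLinearEquiv.toHomeomorph.isCompact_preimage.mpr h
  refine hh.of_isClosed_subset isClosed_closure (closure_minimal ?_ hh.isClosed)
  rw [← preimage_Psi f]
  exact preimage_mono subset_closure

lemma closure_Sf_subset {d : ℕ} {f : EuclideanSpace ℝ (Fin d) → ℝ} :
    closure (Sf f) ⊆ Psi d ⁻¹' closure (Qf f) := by
  refine closure_minimal ?_ (isClosed_closure.preimage (continuous_Psi d))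
  rw [← preimage_Psi f]
  exact preimage_mono subset_closure

lemma norm_gradient_eq {n : ℕ} (u : EuclideanSpace ℝ (Fin n) → ℝ)
    (x : EuclideanSpace ℝ (Fin n)) : ‖gradient u x‖ = ‖fderiv ℝ u x‖ := by
  unfold gradient
  exact LinearIsometryEquiv.norm_map _ _

lemma cs_Ioo {a : ℝ} (ha : 0 ≤ a) {g : ℝ → ℝ} (hg : IntegrableOn g (Ioo 0 a))
    (hg2 : IntegrableOn (fun s => g s ^ 2) (Ioo 0 a)) :
    (∫ s in Ioo 0 a, g s) ^ 2 ≤ a * ∫ s in Ioo 0 a, g s ^ 2 := by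
  rcases eq_or_lt_of_le ha with rfl | hpos
  · simp
  set B := ∫ s in Ioo 0 a, g s with hB
  set A := ∫ s in Ioo 0 a, g s ^ 2 with hA
  set c := B / a with hc
  have hvol : (volume (Ioo (0:ℝ) a)).toReal = a := by
    rw [Real.volume_Ioo, sub_zero, ENNReal.toReal_ofReal ha]
  have hfin : volume (Ioo (0:ℝ) a) < ⊤ := by
    rw [Real.volume_Ioo]; exact ENNReal.ofReal_lt_top
  have intc : IntegrableOn (fun _ : ℝ => c ^ 2) (Ioo 0 a) :=
    integrableOn_const hfin.ne
  have int1 : IntegrableOn (fun s => g s ^ 2 - 2 * c * g s) (Ioo 0 a) :=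
    hg2.sub (hg.const_mul (2 * c))
  have hnn : (0:ℝ) ≤ ∫ s in Ioo 0 a, (g s - c) ^ 2 :=
    setIntegral_nonneg measurableSet_Ioo fun s _ => sq_nonneg _
  have hexp : ∫ s in Ioo 0 a, (g s - c) ^ 2 = A - 2 * c * B + c ^ 2 * a := by
    have h1 : ∫ s in Ioo 0 a, (g s - c) ^ 2
        = ∫ s in Ioo 0 a, ((g s ^ 2 - 2 * c * g s) + c ^ 2) := by
      apply setIntegral_congr_fun measurableSet_Ioo
      intro s _
      ring
    rw [h1, integral_add int1 intc, integral_sub hg2 (hg.const_mul (2 * c)),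
      integral_const_mul, setIntegral_const, measureReal_def, hvol, smul_eq_mul]
    ring
  rw [hexp] at hnn
  have ha' : a ≠ 0 := hpos.ne'
  have hq : B = c * a := (div_mul_cancel₀ B ha').symm
  nlinarith [hnn, hpos, hq]

lemma segment_mem_closure {d : ℕ} {f : EuclideanSpace ℝ (Fin d) → ℝ}
    {y : EuclideanSpace ℝ (Fin d)} (hy : y ∈ cube d) (hfy : 0 < f y)
    {s : ℝ} (hs : s ∈ Icc 0 (f y)) : Psi d (y, s) ∈ closure (Qf f) := by
  have hsub : (fun t => Psi d (y, t)) '' (Ioo 0 (f y)) ⊆ Qf f := by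
    rintro _ ⟨t, ht, rfl⟩
    show Psi d (y, t) ∈ Qf f
    refine ⟨?_, ?_⟩
    · rw [proj_Psi]; exact hy
    · rw [Psi_apply_last, proj_Psi]; exact ht
  have hc : Continuous fun t : ℝ => Psi d (y, t) :=
    (continuous_Psi d).comp (Continuous.prodMk_right y)
  have h1 : Psi d (y, s) ∈ (fun t => Psi d (y, t)) '' closure (Ioo 0 (f y)) :=
    ⟨s, by rwa [closure_Ioo hfy.ne], rfl⟩
  exact closure_mono hsub ((image_closure_subset_closure_image hc) h1)

lemma core_estimate {d : ℕ} {f : EuclideanSpace ℝ (Fin d) → ℝ} {M : ℝ}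
    (hf1 : ∀ y ∈ cube d, f y ∈ Icc 1 M)
    {u : EuclideanSpace ℝ (Fin (d+1)) → ℝ} {U : Set (EuclideanSpace ℝ (Fin (d+1)))}
    (hU : IsOpen U) (hUQ : closure (Qf f) ⊆ U) (hu : ContDiffOn ℝ 1 u U)
    (hu0 : ∀ y ∈ cube d, u (embed y) = 0) {y : EuclideanSpace ℝ (Fin d)} (hy : y ∈ cube d) :
    ∫ t in Ioo 0 (f y), (u (Psi d (y, t))) ^ 2
      ≤ M ^ 2 * ∫ t in Ioo 0 (f y), ‖gradient u (Psi d (y, t))‖ ^ 2 := by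
  obtain ⟨hfy1, hfyM⟩ := hf1 y hy
  have hfy0 : (0:ℝ) < f y := lt_of_lt_of_le one_pos hfy1
  have hM1 : (1:ℝ) ≤ M := hfy1.trans hfyM
  set D := fun s : ℝ => fderiv ℝ u (Psi d (y, s)) (eLast d) with hD
  set G := fun s : ℝ => ‖fderiv ℝ u (Psi d (y, s))‖ with hG
  have hsegU : ∀ s ∈ Icc 0 (f y), Psi d (y, s) ∈ U := fun s hs =>
    hUQ (segment_mem_closure hy hfy0 hs)
  have hPsicont : Continuous fun s : ℝ => Psi d (y, s) :=
    (continuous_Psi d).comp (Continuous.prodMk_right y)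
  have hfd : ContinuousOn (fderiv ℝ u) U := hu.continuousOn_fderiv_of_isOpen hU le_rfl
  have hfdc : ContinuousOn (fun s : ℝ => fderiv ℝ u (Psi d (y, s))) (Icc 0 (f y)) :=
    hfd.comp hPsicont.continuousOn hsegU
  have hDcont : ContinuousOn D (Icc 0 (f y)) := hfdc.clm_apply continuousOn_const
  have hGcont : ContinuousOn G (Icc 0 (f y)) := hfdc.norm
  have hnormE : ‖eLast d‖ = 1 := by
    rw [eLast, EuclideanSpace.norm_single, norm_one]
  have hDG : ∀ s, |D s| ≤ G s := by
    intro s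
    calc |D s| = ‖fderiv ℝ u (Psi d (y, s)) (eLast d)‖ := (Real.norm_eq_abs _).symm
      _ ≤ ‖fderiv ℝ u (Psi d (y, s))‖ * ‖eLast d‖ := ContinuousLinearMap.le_opNorm _ _
      _ = G s := by rw [hnormE, mul_one]
  have hderiv : ∀ s ∈ Icc 0 (f y), HasDerivAt (fun r => u (Psi d (y, r))) (D s) s := by
    intro s hs
    have hdiff : DifferentiableAt ℝ u (Psi d (y, s)) :=
      (hu.differentiableOn one_ne_zero).differentiableAt (hU.mem_nhds (hsegU s hs))
    have hline : HasDerivAt (fun r : ℝ => Psi d (y, r)) (eLast d) s := by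
      have heq : (fun r : ℝ => Psi d (y, r)) = fun r => embed y + r • eLast d := rfl
      rw [heq]
      simpa using ((hasDerivAt_id s).smul_const (eLast d)).const_add (embed y)
    exact hdiff.hasFDerivAt.comp_hasDerivAt s hline
  have hGIcc : IntegrableOn G (Icc 0 (f y)) := hGcont.integrableOn_compact isCompact_Icc
  have hG2Icc : IntegrableOn (fun s => G s ^ 2) (Icc 0 (f y)) :=
    (hGcont.pow 2).integrableOn_compact isCompact_Icc
  have hDIcc : IntegrableOn (fun s => |D s|) (Icc 0 (f y)) :=
    (hDcont.abs).integrableOn_compact isCompact_Icc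
  have hG2nonneg : (0:ℝ) ≤ ∫ s in Ioo 0 (f y), G s ^ 2 :=
    setIntegral_nonneg measurableSet_Ioo fun s _ => sq_nonneg _
  have hFTC : ∀ t ∈ Icc 0 (f y), u (Psi d (y, t)) = ∫ s in (0:ℝ)..t, D s := by
    intro t ht
    have hsub : uIcc (0:ℝ) t ⊆ Icc 0 (f y) := by
      rw [uIcc_of_le ht.1]
      exact Icc_subset_Icc le_rfl ht.2
    have hInt : IntervalIntegrable D volume 0 t :=
      (hDcont.mono hsub).intervalIntegrable
    have h := intervalIntegral.integral_eq_sub_of_hasDerivAt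
      (fun s hs => hderiv s (hsub hs)) hInt
    have h0 : u (Psi d (y, 0)) = 0 := by rw [Psi_zero]; exact hu0 y hy
    rw [h, h0, sub_zero]
  have key : ∀ t ∈ Ioo 0 (f y),
      (u (Psi d (y, t))) ^ 2 ≤ M * ∫ s in Ioo 0 (f y), G s ^ 2 := by
    intro t ht
    have ht' : t ∈ Icc 0 (f y) := ⟨ht.1.le, ht.2.le⟩
    have hsub : Ioo (0:ℝ) t ⊆ Icc 0 (f y) := fun s hs => ⟨hs.1.le, hs.2.le.trans ht.2.le⟩
    have hsub' : Ioo (0:ℝ) t ⊆ Ioo 0 (f y) := Ioo_subset_Ioo le_rfl ht.2.le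
    have hGt : IntegrableOn G (Ioo 0 t) := hGIcc.mono_set hsub
    have hG2t : IntegrableOn (fun s => G s ^ 2) (Ioo 0 t) := hG2Icc.mono_set hsub
    have hDt : IntegrableOn (fun s => |D s|) (Ioo 0 t) := hDIcc.mono_set hsub
    rw [hFTC t ht', intervalIntegral.integral_of_le ht.1.le, integral_Ioc_eq_integral_Ioo]
    have h1 : |∫ s in Ioo 0 t, D s| ≤ ∫ s in Ioo 0 t, |D s| := by
      simpa [Real.norm_eq_abs] using
        norm_integral_le_integral_norm (μ := volume.restrict (Ioo 0 t)) D
    have h2 : ∫ s in Ioo 0 t, |D s| ≤ ∫ s in Ioo 0 t, G s :=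
      setIntegral_mono_on hDt hGt measurableSet_Ioo fun s _ => hDG s
    have h3 : (∫ s in Ioo 0 t, D s) ^ 2 ≤ (∫ s in Ioo 0 t, G s) ^ 2 := by
      have habs : |∫ s in Ioo 0 t, D s| ≤ ∫ s in Ioo 0 t, G s := h1.trans h2
      calc (∫ s in Ioo 0 t, D s) ^ 2 = |∫ s in Ioo 0 t, D s| ^ 2 := (sq_abs _).symm
        _ ≤ (∫ s in Ioo 0 t, G s) ^ 2 := by
            exact pow_le_pow_left₀ (abs_nonneg _) habs 2
    have h4 : (∫ s in Ioo 0 t, G s) ^ 2 ≤ t * ∫ s in Ioo 0 t, G s ^ 2 :=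
      cs_Ioo ht.1.le hGt hG2t
    have h5 : ∫ s in Ioo 0 t, G s ^ 2 ≤ ∫ s in Ioo 0 (f y), G s ^ 2 :=
      setIntegral_mono_set (hG2Icc.mono_set Ioo_subset_Icc_self)
        (Filter.Eventually.of_forall fun s => sq_nonneg _) (HasSubset.Subset.eventuallyLE hsub')
    have h6 : (0:ℝ) ≤ ∫ s in Ioo 0 t, G s ^ 2 :=
      setIntegral_nonneg measurableSet_Ioo fun s _ => sq_nonneg _
    have htM : t ≤ M := ht.2.le.trans hfyM
    nlinarith [h3, h4, h5, h6, ht.1.le, htM]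
  have hucont : ContinuousOn (fun t : ℝ => u (Psi d (y, t))) (Icc 0 (f y)) :=
    hu.continuousOn.comp hPsicont.continuousOn hsegU
  have hu2int : IntegrableOn (fun t => (u (Psi d (y, t))) ^ 2) (Ioo 0 (f y)) :=
    ((hucont.pow 2).integrableOn_compact isCompact_Icc).mono_set Ioo_subset_Icc_self
  have hfin : volume (Ioo (0:ℝ) (f y)) < ⊤ := by
    rw [Real.volume_Ioo]; exact ENNReal.ofReal_lt_top
  have hconstint : IntegrableOn (fun _ : ℝ => M * ∫ s in Ioo 0 (f y), G s ^ 2)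
      (Ioo 0 (f y)) := integrableOn_const hfin.ne
  have hgradeq : (fun t : ℝ => ‖gradient u (Psi d (y, t))‖ ^ 2) = fun t => G t ^ 2 := by
    funext t
    rw [norm_gradient_eq]
  rw [hgradeq]
  calc ∫ t in Ioo 0 (f y), (u (Psi d (y, t))) ^ 2
      ≤ ∫ _t in Ioo 0 (f y), (M * ∫ s in Ioo 0 (f y), G s ^ 2) :=
        setIntegral_mono_on hu2int hconstint measurableSet_Ioo key
    _ = f y * (M * ∫ s in Ioo 0 (f y), G s ^ 2) := by
        rw [setIntegral_const, measureReal_def, Real.volume_Ioo, sub_zero, ENNReal.toReal_ofReal hfy0.le,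
          smul_eq_mul]
    _ ≤ M ^ 2 * ∫ s in Ioo 0 (f y), G s ^ 2 := by
        have hMX : 0 ≤ M * ∫ s in Ioo 0 (f y), G s ^ 2 :=
          mul_nonneg (zero_le_one.trans hM1) hG2nonneg
        nlinarith [mul_le_mul_of_nonneg_right hfyM hMX]

lemma fubini_Sf {d : ℕ} {f : EuclideanSpace ℝ (Fin d) → ℝ} (hSm : MeasurableSet (Sf f))
    {h : EuclideanSpace ℝ (Fin d) × ℝ → ℝ} (hint : IntegrableOn h (Sf f)) :
    ∫ p in Sf f, h p = ∫ y, ∫ t, (Sf f).indicator h (y, t) := by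
  rw [← integral_indicator hSm]
  have hind : Integrable ((Sf f).indicator h)
      ((volume : Measure (EuclideanSpace ℝ (Fin d))).prod volume) :=
    (integrable_indicator_iff hSm).mpr hint
  exact integral_prod _ hind

theorem stmt_10 (d : ℕ) (hd : 1 ≤ d) (L M : ℝ) (hL : 0 < L) (hM : 1 < M) :
    ∃ C > (0 : ℝ), ∀ f : EuclideanSpace ℝ (Fin d) → ℝ,
      (∀ y ∈ cube d, f y ∈ Icc 1 M) →
      LipschitzOnWith L.toNNReal f (cube d) →
      ∀ (u : EuclideanSpace ℝ (Fin (d + 1)) → ℝ) (U : Set (EuclideanSpace ℝ (Fin (d + 1)))),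
        IsOpen U → closure (Qf f) ⊆ U → ContDiffOn ℝ 1 u U →
        (∀ y ∈ cube d, u (embed y) = 0) →
        ∫ x in Qf f, (u x) ^ 2 ≤ C ^ 2 * ∫ x in Qf f, ‖gradient u x‖ ^ 2 := by
  refine ⟨M, by linarith, ?_⟩
  intro f hf1 hfL u U hU hUQ hu hu0
  have hfM : ∀ y ∈ cube d, f y ≤ M := fun y hy => (hf1 y hy).2
  have hfc : ContinuousOn f (cube d) := hfL.continuousOn
  have hSopen : IsOpen (Sf f) := isOpen_Sf hfc
  have hSm : MeasurableSet (Sf f) := hSopen.measurableSet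
  have hclS : MapsTo (Psi d) (closure (Sf f)) U := fun p hp =>
    (preimage_mono hUQ) (closure_Sf_subset hp)
  have hScomp : IsCompact (closure (Sf f)) := isCompact_closure_Sf hfM
  have hcont1 : ContinuousOn (fun p => (u (Psi d p)) ^ 2) (closure (Sf f)) :=
    (hu.continuousOn.comp (continuous_Psi d).continuousOn hclS).pow 2
  have hcont2 : ContinuousOn (fun p => ‖gradient u (Psi d p)‖ ^ 2) (closure (Sf f)) := by
    have hfd : ContinuousOn (fun x => ‖fderiv ℝ u x‖ ^ 2) U :=
      ((hu.continuousOn_fderiv_of_isOpen hU le_rfl).norm).pow 2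
    have heq : (fun p => ‖gradient u (Psi d p)‖ ^ 2)
        = fun p => ‖fderiv ℝ u (Psi d p)‖ ^ 2 := by
      funext p; rw [norm_gradient_eq]
    rw [heq]
    exact hfd.comp (continuous_Psi d).continuousOn hclS
  have hint1 : IntegrableOn (fun p => (u (Psi d p)) ^ 2) (Sf f) :=
    (hcont1.integrableOn_compact hScomp).mono_set subset_closure
  have hint2 : IntegrableOn (fun p => ‖gradient u (Psi d p)‖ ^ 2) (Sf f) :=
    (hcont2.integrableOn_compact hScomp).mono_set subset_closure
  have hind1 : Integrable ((Sf f).indicator (fun p => (u (Psi d p)) ^ 2))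
      ((volume : Measure (EuclideanSpace ℝ (Fin d))).prod volume) :=
    (integrable_indicator_iff hSm).mpr hint1
  have hind2 : Integrable ((Sf f).indicator (fun p => ‖gradient u (Psi d p)‖ ^ 2))
      ((volume : Measure (EuclideanSpace ℝ (Fin d))).prod volume) :=
    (integrable_indicator_iff hSm).mpr hint2
  have eq1 : ∫ x in Qf f, (u x) ^ 2
      = ∫ y, ∫ t, (Sf f).indicator (fun p => (u (Psi d p)) ^ 2) (y, t) := by
    rw [← (measurePreserving_Psi d).setIntegral_preimage_emb (measurableEmbedding_Psi d)
      (fun x => (u x) ^ 2) (Qf f), preimage_Psi]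
    exact fubini_Sf hSm hint1
  have eq2 : ∫ x in Qf f, ‖gradient u x‖ ^ 2
      = ∫ y, ∫ t, (Sf f).indicator (fun p => ‖gradient u (Psi d p)‖ ^ 2) (y, t) := by
    rw [← (measurePreserving_Psi d).setIntegral_preimage_emb (measurableEmbedding_Psi d)
      (fun x => ‖gradient u x‖ ^ 2) (Qf f), preimage_Psi]
    exact fubini_Sf hSm hint2
  have hpt : ∀ y, (∫ t, (Sf f).indicator (fun p => (u (Psi d p)) ^ 2) (y, t))
      ≤ M ^ 2 * ∫ t, (Sf f).indicator (fun p => ‖gradient u (Psi d p)‖ ^ 2) (y, t) := by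
    intro y
    by_cases hy : y ∈ cube d
    · have hre : ∀ h : EuclideanSpace ℝ (Fin d) × ℝ → ℝ,
          (fun t => (Sf f).indicator h (y, t))
            = (Ioo 0 (f y)).indicator (fun t => h (y, t)) := by
        intro h; funext t
        by_cases ht : t ∈ Ioo 0 (f y)
        · rw [indicator_of_mem ht, indicator_of_mem (show (y, t) ∈ Sf f from ⟨hy, ht⟩)]
        · rw [indicator_of_notMem ht, indicator_of_notMem (fun hc => ht hc.2)]
      rw [hre, hre, integral_indicator measurableSet_Ioo, integral_indicator measurableSet_Ioo]
      exact core_estimate hf1 hU hUQ hu hu0 hy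
    · have hre0 : ∀ h : EuclideanSpace ℝ (Fin d) × ℝ → ℝ,
          (fun t => (Sf f).indicator h (y, t)) = fun _ => (0:ℝ) := by
        intro h; funext t
        exact indicator_of_notMem (fun hc => hy hc.1) _
      rw [hre0, hre0]
      simp
  have hI1 : Integrable (fun y => ∫ t, (Sf f).indicator
      (fun p => (u (Psi d p)) ^ 2) (y, t)) := hind1.integral_prod_left
  have hI2 : Integrable (fun y => ∫ t, (Sf f).indicator
      (fun p => ‖gradient u (Psi d p)‖ ^ 2) (y, t)) := hind2.integral_prod_left
  calc ∫ x in Qf f, (u x) ^ 2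
      = ∫ y, ∫ t, (Sf f).indicator (fun p => (u (Psi d p)) ^ 2) (y, t) := eq1
    _ ≤ ∫ y, M ^ 2 * ∫ t, (Sf f).indicator
          (fun p => ‖gradient u (Psi d p)‖ ^ 2) (y, t) :=
        integral_mono hI1 (hI2.const_mul _) hpt
    _ = M ^ 2 * ∫ y, ∫ t, (Sf f).indicator
          (fun p => ‖gradient u (Psi d p)‖ ^ 2) (y, t) := integral_const_mul _ _
    _ = M ^ 2 * ∫ x in Qf f, ‖gradient u x‖ ^ 2 := by rw [eq2]
end
end

section
/- Let M > 1, let b ∈ [1, M], and let v : ℝ → ℝ be continuously differentiable on an open neighborhood of [0, b]. Then for every y ∈ [0, b] one has ∫_0^y v(t)² dt ≤ 2M ∫_0^1 v(t)² dt + 2M² ∫_0^b v'(t)² dt. -/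
open Set MeasureTheory intervalIntegral

/-- Cauchy–Schwarz for interval integrals of continuous functions. -/
lemma cs_aux {g : ℝ → ℝ} {c d : ℝ} (hcd : c ≤ d) (hg : ContinuousOn g (Icc c d)) :
    (∫ t in c..d, g t) ^ 2 ≤ (d - c) * ∫ t in c..d, (g t) ^ 2 := by
  rcases eq_or_lt_of_le hcd with rfl | h
  · simp
  · have huv : Set.uIcc c d = Icc c d := Set.uIcc_of_le hcd
    have hgi : IntervalIntegrable g volume c d := (huv ▸ hg).intervalIntegrable
    have hg2 : IntervalIntegrable (fun t => g t ^ 2) volume c d :=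
      ((huv ▸ hg).pow 2).intervalIntegrable
    set L := d - c with hL
    have hL0 : 0 < L := by simp only [hL]; linarith
    set I := ∫ t in c..d, g t with hI
    set A := I / L with hA
    have key : ∫ t in c..d, (g t - A) ^ 2
        = (∫ t in c..d, g t ^ 2) - 2 * A * I + A ^ 2 * L := by
      have hcongr : ∀ t, (g t - A) ^ 2 = g t ^ 2 - (2 * A) * g t + A ^ 2 := by
        intro t; ring
      simp only [hcongr]
      rw [intervalIntegral.integral_add (hg2.sub (hgi.const_mul _)) intervalIntegrable_const,
        intervalIntegral.integral_sub hg2 (hgi.const_mul _),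
        intervalIntegral.integral_const_mul, intervalIntegral.integral_const]
      simp [← hI, hL]
      ring
    have hpos : 0 ≤ ∫ t in c..d, (g t - A) ^ 2 :=
      intervalIntegral.integral_nonneg hcd fun t _ => sq_nonneg _
    rw [key] at hpos
    have hAL : A * L = I := div_mul_cancel₀ I (ne_of_gt hL0)
    nlinarith [hpos, hL0, sq_nonneg A]

noncomputable section

theorem stmt_15 (M b : ℝ) (hM : 1 < M) (hb : b ∈ Icc 1 M)
    (v : ℝ → ℝ) (U : Set ℝ) (hU : IsOpen U) (hIccU : Icc 0 b ⊆ U)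
    (hv : ContDiffOn ℝ 1 v U) :
    ∀ y ∈ Icc 0 b,
      ∫ t in (0 : ℝ)..y, (v t) ^ 2 ≤
        2 * M * ∫ t in (0 : ℝ)..1, (v t) ^ 2 + 2 * M ^ 2 * ∫ t in (0 : ℝ)..b, (deriv v t) ^ 2 := by
  intro y hy
  have hb1 : 1 ≤ b := hb.1
  have hbM : b ≤ M := hb.2
  have hb0 : (0:ℝ) ≤ b := by linarith
  have hM0 : (0:ℝ) < M := by linarith
  have hcv : ContinuousOn v (Icc 0 b) := hv.continuousOn.mono hIccU
  have hdv : ContinuousOn (deriv v) (Icc 0 b) :=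
    (hv.continuousOn_deriv_of_isOpen hU le_rfl).mono hIccU
  have hderiv : ∀ x ∈ Icc 0 b, HasDerivAt v (deriv v x) x := fun x hx =>
    ((hv.differentiableOn one_ne_zero).differentiableAt (hU.mem_nhds (hIccU hx))).hasDerivAt
  set C := ∫ t in (0:ℝ)..1, (v t) ^ 2 with hC
  set D := ∫ t in (0:ℝ)..b, (deriv v t) ^ 2 with hD
  have hC0 : 0 ≤ C := intervalIntegral.integral_nonneg (by norm_num) fun t _ => sq_nonneg _
  have hD0 : 0 ≤ D := intervalIntegral.integral_nonneg hb0 fun t _ => sq_nonneg _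
  have hDint : IntervalIntegrable (fun t => (deriv v t) ^ 2) volume 0 b :=
    (((Set.uIcc_of_le hb0) ▸ hdv).pow 2).intervalIntegrable
  -- key pointwise bound
  have key : ∀ t ∈ Icc (0:ℝ) b, (v t) ^ 2 ≤ 2 * C + 2 * M * D := by
    intro t ht
    have hpt : ∀ s ∈ Icc (0:ℝ) 1, (v t) ^ 2 ≤ 2 * (v s) ^ 2 + 2 * M * D := by
      intro s hs
      have hs' : s ∈ Icc (0:ℝ) b := ⟨hs.1, hs.2.trans hb1⟩
      have hsub : Set.uIcc s t ⊆ Icc 0 b := by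
        rw [← Set.uIcc_of_le hb0]
        exact Set.uIcc_subset_uIcc ((Set.uIcc_of_le hb0) ▸ hs') ((Set.uIcc_of_le hb0) ▸ ht)
      have hftc : ∫ x in s..t, deriv v x = v t - v s :=
        intervalIntegral.integral_eq_sub_of_hasDerivAt (fun x hx => hderiv x (hsub hx))
          (hdv.mono hsub).intervalIntegrable
      set I := ∫ x in s..t, deriv v x with hIdef
      have hI2 : I ^ 2 ≤ M * D := by
        rcases le_total s t with hst | hst
        · have hsubIcc : Icc s t ⊆ Icc 0 b := (Set.uIcc_of_le hst) ▸ hsub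
          have h1 := cs_aux hst (hdv.mono hsubIcc)
          have h2 : (∫ x in s..t, (deriv v x) ^ 2) ≤ D :=
            intervalIntegral.integral_mono_interval hs'.1 hst ht.2
              (Filter.Eventually.of_forall fun x => sq_nonneg _) hDint
          have h3 : 0 ≤ ∫ x in s..t, (deriv v x) ^ 2 :=
            intervalIntegral.integral_nonneg hst fun x _ => sq_nonneg _
          have h4 : t - s ≤ M := by
            have := ht.2; have := hs'.1; linarith
          nlinarith [h1, h2, h3, h4, sub_nonneg.mpr hst]
        · have hsubIcc : Icc t s ⊆ Icc 0 b := by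
            rw [← Set.uIcc_of_le hst, Set.uIcc_comm]; exact hsub
          have h1 := cs_aux hst (hdv.mono hsubIcc)
          have h2 : (∫ x in t..s, (deriv v x) ^ 2) ≤ D :=
            intervalIntegral.integral_mono_interval ht.1 hst hs'.2
              (Filter.Eventually.of_forall fun x => sq_nonneg _) hDint
          have h3 : 0 ≤ ∫ x in t..s, (deriv v x) ^ 2 :=
            intervalIntegral.integral_nonneg hst fun x _ => sq_nonneg _
          have h4 : s - t ≤ M := by
            have := hs'.2; have := ht.1; linarith
          have hIneg : I = -(∫ x in t..s, deriv v x) := by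
            rw [hIdef, intervalIntegral.integral_symm]
          rw [hIneg]
          have : (-(∫ x in t..s, deriv v x)) ^ 2 = (∫ x in t..s, deriv v x) ^ 2 := by ring
          rw [this]
          nlinarith [h1, h2, h3, h4, sub_nonneg.mpr hst]
      have hvt : v t = v s + I := by linarith [hftc]
      rw [hvt]
      nlinarith [sq_nonneg (v s - I), hI2]
    -- integrate over s ∈ [0,1]
    have hv2int : IntervalIntegrable (fun s => (v s) ^ 2) volume 0 1 := by
      have hsubIcc : Icc (0:ℝ) 1 ⊆ Icc 0 b := Icc_subset_Icc le_rfl hb1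
      exact ((Set.uIcc_of_le (by norm_num : (0:ℝ) ≤ 1)) ▸ ((hcv.mono hsubIcc).pow 2)).intervalIntegrable
    have hmono : (∫ s in (0:ℝ)..1, (v t) ^ 2) ≤ ∫ s in (0:ℝ)..1, (2 * (v s) ^ 2 + 2 * M * D) :=
      intervalIntegral.integral_mono_on (by norm_num) intervalIntegrable_const
        (((hv2int.const_mul 2)).add intervalIntegrable_const) hpt
    have hlhs : (∫ s in (0:ℝ)..1, (v t) ^ 2) = (v t) ^ 2 := by simp
    have hrhs : (∫ s in (0:ℝ)..1, (2 * (v s) ^ 2 + 2 * M * D)) = 2 * C + 2 * M * D := by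
      rw [intervalIntegral.integral_add (hv2int.const_mul 2) intervalIntegrable_const,
        intervalIntegral.integral_const_mul, intervalIntegral.integral_const]
      simp [← hC]
    rw [hlhs, hrhs] at hmono
    exact hmono
  -- integrate the key bound over [0, y]
  have hy0 : (0:ℝ) ≤ y := hy.1
  have hyb : y ≤ b := hy.2
  have hv2y : IntervalIntegrable (fun t => (v t) ^ 2) volume 0 y := by
    have hsubIcc : Icc (0:ℝ) y ⊆ Icc 0 b := Icc_subset_Icc le_rfl hyb
    exact ((Set.uIcc_of_le hy0) ▸ ((hcv.mono hsubIcc).pow 2)).intervalIntegrable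
  have hmain : (∫ t in (0:ℝ)..y, (v t) ^ 2) ≤ ∫ t in (0:ℝ)..y, (2 * C + 2 * M * D) :=
    intervalIntegral.integral_mono_on hy0 hv2y intervalIntegrable_const
      fun x hx => key x ⟨hx.1, hx.2.trans hyb⟩
  have hconst : (∫ t in (0:ℝ)..y, (2 * C + 2 * M * D)) = y * (2 * C + 2 * M * D) := by
    rw [intervalIntegral.integral_const]; simp [smul_eq_mul]
  -- compute the RHS of the goal
  have hRHS : (∫ t in (0:ℝ)..1, ((v t) ^ 2 + 2 * M ^ 2 * D)) = C + 2 * M ^ 2 * D := by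
    have hv2int : IntervalIntegrable (fun s => (v s) ^ 2) volume 0 1 := by
      have hsubIcc : Icc (0:ℝ) 1 ⊆ Icc 0 b := Icc_subset_Icc le_rfl hb1
      exact ((Set.uIcc_of_le (by norm_num : (0:ℝ) ≤ 1)) ▸ ((hcv.mono hsubIcc).pow 2)).intervalIntegrable
    rw [intervalIntegral.integral_add hv2int intervalIntegrable_const,
      intervalIntegral.integral_const]
    simp [← hC]
  calc (∫ t in (0:ℝ)..y, (v t) ^ 2) ≤ y * (2 * C + 2 * M * D) := by rw [← hconst]; exact hmain
    _ ≤ 2 * M * (C + 2 * M ^ 2 * D) := by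
        have h5 : y ≤ M := hyb.trans hbM
        have h6 : (0:ℝ) ≤ 2 * M ^ 2 - y := by nlinarith
        nlinarith [mul_nonneg (sub_nonneg.2 h5) hC0, mul_nonneg (mul_nonneg hM0.le hD0) h6]
    _ = 2 * M * ∫ t in (0:ℝ)..1, ((v t) ^ 2 + 2 * M ^ 2 * D) := by rw [hRHS]
end
end
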